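/- Let L < 0 < U and let s̲, t̲ be the coefficients s̲ = -L/(U-L), t̲ = L·U/(U-L). Suppose real numbers s, t satisfy s·J + t ≤ J·δ for all J ∈ [L, U] and all δ ∈ [0, 1], and (s, t) ≠ (s̲, t̲). Then for every J with L < J < U, s·J + t < s̲·J + t̲. -/

import Mathlib

theorem lower_relaxation_optimal (L U : ℝ) (hL : L < 0) (hU : 0 < U)
    (s t : ℝ)
    (hvalid : ∀ J δ : ℝ, L ≤ J → J ≤ U → 0 ≤ δ → δ ≤ 1 → s * J + t ≤ J * δ)
    (hne : (s, t) ≠ (-L / (U - L), L * U / (U - L))) :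
    ∀ J : ℝ, L < J → J < U →
      s * J + t < (-L / (U - L)) * J + L * U / (U - L) := by
  intro J hJL hJU
  have hUL : (0:ℝ) < U - L := by linarith
  have hA : s * L + t ≤ L := by
    have := hvalid L 1 le_rfl (by linarith) (by norm_num) le_rfl
    linarith
  have hB : s * U + t ≤ 0 := by
    have := hvalid U 0 (by linarith) le_rfl le_rfl (by norm_num)
    linarith
  have h1 : 0 < U - J := by linarith
  have h2 : 0 < J - L := by linarith
  have key : (U - J) * (s * L + t - L) + (J - L) * (s * U + t) < 0 := by
    rcases eq_or_lt_of_le hA with ha | ha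
    · rcases eq_or_lt_of_le hB with hb | hb
      · exfalso
        apply hne
        have hs : s = -L / (U - L) := by
          field_simp
          nlinarith
        have ht : t = L * U / (U - L) := by
          field_simp
          nlinarith
        simp [hs, ht]
      · nlinarith
    · nlinarith
  rw [show (-L / (U - L)) * J + L * U / (U - L) = (-L * J + L * U) / (U - L) by
    field_simp, lt_div_iff₀ hUL]
  nlinarith [key]
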